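/- Let ν, ν′ ∈ I_τ be two translation-invariant stationary measures of a PCA. If ν satisfies GCB(C) and ν′ ≠ ν, then s_*(ν′|ν) > 0; in particular, ν and ν′ cannot both be Gibbs measures for the same translation-invariant absolutely summable potential. -/

import Mathlib

open MeasureTheory Filter
open scoped ENNReal

/-- Spatial configurations: spins (encoded as `Bool`, `true` = +1) indexed by `ι`. -/
abbrev Config (ι : Type*) := ι → Bool

/-- The lattice `ℤ^d`. -/
abbrev Site (d : ℕ) := Fin d → ℤ

/-- Spin value `±1` of a Boolean. -/
noncomputable def spin (b : Bool) : ℝ := if b then 1 else -1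

/-- Flip the spin of `σ` at site `x`. -/
def flipAt {ι : Type*} [DecidableEq ι] (σ : Config ι) (x : ι) : Config ι :=
  Function.update σ x (!σ x)

/-- Oscillation `δ_x f = sup_σ (f(σ^{(x)}) - f(σ))`. -/
noncomputable def osc {ι : Type*} [DecidableEq ι] (f : Config ι → ℝ) (x : ι) : ℝ :=
  ⨆ σ : Config ι, (f (flipAt σ x) - f σ)

/-- `‖δ f‖₂²  = ∑_x (δ_x f)²`. -/
noncomputable def oscNormSq {ι : Type*} [DecidableEq ι] (f : Config ι → ℝ) : ℝ :=
  ∑' x : ι, osc f x ^ 2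

/-- `‖δ f‖₁ = ∑_x δ_x f`. -/
noncomputable def oscNorm1 {ι : Type*} [DecidableEq ι] (f : Config ι → ℝ) : ℝ :=
  ∑' x : ι, osc f x

/-- `f` depends only on the coordinates in `Λ` (i.e. `f` is `F_Λ`-measurable). -/
def LocalOn {ι : Type*} (Λ : Finset ι) (f : Config ι → ℝ) : Prop :=
  ∀ σ τ : Config ι, (∀ x ∈ Λ, σ x = τ x) → f σ = f τ

/-- `f` is a local function. -/
def IsLocal {ι : Type*} (f : Config ι → ℝ) : Prop := ∃ Λ : Finset ι, LocalOn Λ f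

/-- Gaussian concentration bound with constant `C`:
`log ∫ e^{f - ∫ f dμ} dμ ≤ (C/2) ‖δ f‖₂²` for every local function `f`. -/
def GCB {ι : Type*} [DecidableEq ι] (μ : Measure (Config ι)) (C : ℝ) : Prop :=
  ∀ f : Config ι → ℝ, IsLocal f →
    Real.log (∫ σ, Real.exp (f σ - ∫ τ, f τ ∂μ) ∂μ) ≤ C / 2 * oscNormSq f

/-- The cylinder set of configurations agreeing with `b` on `Λ`. -/
def cyl {ι : Type*} (Λ : Finset ι) (b : ι → Bool) : Set (Config ι) :=
  {σ | ∀ x ∈ Λ, σ x = b x}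

/-- `h_x(η) = ∑_{A ⋐ ℤ^d} r_A η_{A+x}`. -/
noncomputable def hfun {d : ℕ} (r : Finset (Site d) → ℝ) (x : Site d)
    (η : Config (Site d)) : ℝ :=
  ∑' A : Finset (Site d), r A * ∏ y ∈ A, spin (η (y + x))

/-- `p_x(η) = ½ (1 + η_x h_x(η))`, the probability that the new spin at `x` is `+1`. -/
noncomputable def pPlus {d : ℕ} (r : Finset (Site d) → ℝ) (x : Site d)
    (η : Config (Site d)) : ℝ :=
  (1 + spin (η x) * hfun r x η) / 2

/-- A (translation-invariant) probabilistic cellular automaton on `{-1,+1}^{ℤ^d}`: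
given the configuration `η`, the next configuration is distributed as the product
measure with marginals `p_x(η)` at site `x`. -/
structure PCA (d : ℕ) where
  r : Finset (Site d) → ℝ
  summable_r : Summable fun A => |r A|
  hbound : ∀ (x : Site d) (η : Config (Site d)), |hfun r x η| ≤ 1
  ker : Config (Site d) → Measure (Config (Site d))
  ker_meas : Measurable ker
  ker_prob : ∀ η, IsProbabilityMeasure (ker η)
  ker_marginal : ∀ (η : Config (Site d)) (Λ : Finset (Site d)) (b : Site d → Bool),
    ker η (cyl Λ b) =
      ∏ x ∈ Λ, ENNReal.ofReal (if b x then pPlus r x η else 1 - pPlus r x η)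

/-- The transition operator `P` acting on functions: `Pf(η) = ∫ f(σ) p(dσ|η)`. -/
noncomputable def Pop {d : ℕ} (P : PCA d) (f : Config (Site d) → ℝ)
    (η : Config (Site d)) : ℝ :=
  ∫ σ, f σ ∂(P.ker η)

/-- The transition operator acting on measures: `μP`. -/
noncomputable def Pmeas {d : ℕ} (P : PCA d) (μ : Measure (Config (Site d))) :
    Measure (Config (Site d)) :=
  μ.bind P.ker

/-- `ψ(x) = ∑_{A ∋ x} |r_A|`. -/
noncomputable def psi {d : ℕ} (P : PCA d) (x : Site d) : ℝ :=
  ∑' A : Finset (Site d), if x ∈ A then |P.r A| else 0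

/-- `‖ψ‖₁ = ∑_{A ⋐ ℤ^d} |A| |r_A|`. -/
noncomputable def psiNorm1 {d : ℕ} (P : PCA d) : ℝ :=
  ∑' A : Finset (Site d), (A.card : ℝ) * |P.r A|

/-- The contraction coefficient `κ = ‖ψ‖₁² = (∑_A |A||r_A|)²`. -/
noncomputable def kappa {d : ℕ} (P : PCA d) : ℝ := psiNorm1 P ^ 2

/-- The shift (translation) of a configuration by `a ∈ ℤ^d`. -/
def shift {d : ℕ} (a : Site d) (σ : Config (Site d)) : Config (Site d) :=
  fun x => σ (x + a)

/-- Translation invariance of a measure on `{-1,+1}^{ℤ^d}`. -/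
def TransInv {d : ℕ} (μ : Measure (Config (Site d))) : Prop :=
  ∀ a : Site d, μ.map (shift a) = μ

/-- The cube `C_n = [-n,n]^d ∩ ℤ^d` as a finite set of sites. -/
noncomputable def cube (d n : ℕ) : Finset (Site d) :=
  Fintype.piFinset fun _ : Fin d => Finset.Icc (-(n : ℤ)) (n : ℤ)

/-- The relative entropy `S_Λ(ν|μ)` of the `Λ`-marginals (in `[0,∞]`,
`∞` unless `ν_Λ ≪ μ_Λ`). -/
noncomputable def relEntVol {ι : Type*} [DecidableEq ι]
    (ν μ : Measure (Config ι)) (Λ : Finset ι) : ℝ≥0∞ := by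
  classical
  exact
    if ∀ b : ι → Bool, μ (cyl Λ b) = 0 → ν (cyl Λ b) = 0 then
      ENNReal.ofReal (∑ b : Λ → Bool,
        (ν (cyl Λ fun x => if h : x ∈ Λ then b ⟨x, h⟩ else false)).toReal *
          Real.log ((ν (cyl Λ fun x => if h : x ∈ Λ then b ⟨x, h⟩ else false)).toReal /
            (μ (cyl Λ fun x => if h : x ∈ Λ then b ⟨x, h⟩ else false)).toReal))
    else ⊤

/-- The lower relative entropy density `s_*(ν|μ) = liminf_n S_{C_n}(ν|μ)/|C_n|`. -/
noncomputable def sStar {d : ℕ} (ν μ : Measure (Config (Site d))) : ℝ≥0∞ :=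
  Filter.liminf (fun n : ℕ => relEntVol ν μ (cube d n) / ((cube d n).card : ℝ≥0∞))
    Filter.atTop


/-! ### Auxiliary lemmas -/

section AuxGeneral

variable {ι : Type*} [DecidableEq ι]

/-- Extension of a boolean configuration on `Λ` to the whole space. -/
def extB (Λ : Finset ι) (c : Λ → Bool) : ι → Bool :=
  fun x => if h : x ∈ Λ then c ⟨x, h⟩ else false

omit [DecidableEq ι] in
lemma measurableSet_cyl (Λ : Finset ι) (b : ι → Bool) : MeasurableSet (cyl Λ b) := by
  have : cyl Λ b = ⋂ x ∈ Λ, ((fun σ : Config ι => σ x) ⁻¹' {b x}) := by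
    ext σ; simp [cyl]
  rw [this]
  exact MeasurableSet.biInter Λ.countable_toSet
    (fun x _ => measurable_pi_apply x (MeasurableSet.singleton (b x)))

omit [DecidableEq ι] in
lemma measurable_restrictΛ (Λ : Finset ι) :
    Measurable (Λ.restrict (π := fun _ : ι => Bool)) :=
  measurable_pi_lambda _ fun _ => measurable_pi_apply _

lemma preimage_restrict_singleton (Λ : Finset ι) (c : Λ → Bool) :
    (Λ.restrict (π := fun _ : ι => Bool)) ⁻¹' {c} = cyl Λ (extB Λ c) := by
  ext σ
  simp only [Set.mem_preimage, Set.mem_singleton_iff, funext_iff, Finset.restrict_def,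
    cyl, Set.mem_setOf_eq, extB]
  constructor
  · rintro h x hx
    rw [dif_pos hx]
    exact h ⟨x, hx⟩
  · rintro h ⟨x, hx⟩
    have := h x hx
    rwa [dif_pos hx] at this

lemma extB_restrict (Λ : Finset ι) (σ : Config ι) (x : ι) (hx : x ∈ Λ) :
    extB Λ (Λ.restrict σ) x = σ x := by
  simp [extB, dif_pos hx, Finset.restrict_def]

lemma LocalOn.eq_comp {Λ : Finset ι} {g : Config ι → ℝ} (hg : LocalOn Λ g) (σ : Config ι) :
    g σ = g (extB Λ (Λ.restrict σ)) :=
  hg σ _ (fun x hx => (extB_restrict Λ σ x hx).symm)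

lemma integral_localOn {Λ : Finset ι} {g : Config ι → ℝ} (hg : LocalOn Λ g)
    (μ : Measure (Config ι)) [IsProbabilityMeasure μ] :
    ∫ σ, g σ ∂μ = ∑ c : Λ → Bool, (μ (cyl Λ (extB Λ c))).toReal * g (extB Λ c) := by
  have hπ := measurable_restrictΛ (ι := ι) Λ
  have : IsProbabilityMeasure (μ.map (Λ.restrict (π := fun _ : ι => Bool))) :=
    Measure.isProbabilityMeasure_map hπ.aemeasurable
  have h1 : ∫ σ, g σ ∂μ
      = ∫ c, g (extB Λ c) ∂(μ.map (Λ.restrict (π := fun _ : ι => Bool))) := by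
    rw [integral_map hπ.aemeasurable (measurable_of_countable _).aestronglyMeasurable]
    exact integral_congr_ae (Eventually.of_forall fun σ => hg.eq_comp σ)
  rw [h1, integral_fintype (Integrable.of_finite)]
  refine Finset.sum_congr rfl fun c _ => ?_
  rw [Measure.real, Measure.map_apply hπ (measurableSet_singleton c), preimage_restrict_singleton,
    smul_eq_mul]

lemma sum_cyl_toReal (Λ : Finset ι) (μ : Measure (Config ι)) [IsProbabilityMeasure μ] :
    ∑ c : Λ → Bool, (μ (cyl Λ (extB Λ c))).toReal = 1 := by
  have h := integral_localOn (Λ := Λ) (g := fun _ => (1 : ℝ)) (fun _ _ _ => rfl) μ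
  simpa using h.symm

lemma exists_cyl_ne (ν' ν : Measure (Config ι))
    [IsProbabilityMeasure ν'] [IsProbabilityMeasure ν] (hne : ν' ≠ ν) :
    ∃ (Λ : Finset ι) (b : ι → Bool), ν' (cyl Λ b) ≠ ν (cyl Λ b) := by
  by_contra h
  push_neg at h
  apply hne
  refine ext_of_generate_finite _ generateFrom_measurableCylinders.symm
    isPiSystem_measurableCylinders ?_ (by simp)
  intro s hs
  obtain ⟨Λ, S, hSm, rfl⟩ := (mem_measurableCylinders s).mp hs
  have hπ := measurable_restrictΛ (ι := ι) Λ
  have hmapeq : ν'.map (Λ.restrict (π := fun _ : ι => Bool))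
      = ν.map (Λ.restrict (π := fun _ : ι => Bool)) := by
    refine Measure.ext_iff_singleton.mpr fun c => ?_
    rw [Measure.map_apply hπ (measurableSet_singleton _),
      Measure.map_apply hπ (measurableSet_singleton _),
      preimage_restrict_singleton]
    exact h Λ (extB Λ c)
  show ν' ((Λ.restrict (π := fun _ : ι => Bool)) ⁻¹' S) = ν (_ ⁻¹' S)
  rw [← Measure.map_apply hπ hSm, ← Measure.map_apply hπ hSm, hmapeq]

end AuxGeneral

lemma one_sub_inv_le_log {x : ℝ} (hx : 0 < x) : 1 - x⁻¹ ≤ Real.log x := by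
  have h := Real.log_le_sub_one_of_pos (inv_pos.mpr hx)
  rw [Real.log_inv] at h
  linarith

/-- The finite Donsker–Varadhan / Gibbs variational inequality. -/
lemma finite_DV {κ : Type*} [Fintype κ] (p q g : κ → ℝ)
    (hp : ∀ i, 0 ≤ p i) (hq : ∀ i, 0 ≤ q i)
    (hp1 : ∑ i, p i = 1) (hq1 : ∑ i, q i = 1)
    (hac : ∀ i, q i = 0 → p i = 0) :
    ∑ i, p i * g i - Real.log (∑ i, q i * Real.exp (g i)) ≤
      ∑ i, p i * Real.log (p i / q i) := by
  set Z := ∑ i, q i * Real.exp (g i) with hZ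
  have hZpos : 0 < Z := by
    obtain ⟨i, hi⟩ : ∃ i, q i ≠ 0 := by
      by_contra h
      push_neg at h
      rw [Finset.sum_eq_zero (fun i _ => h i)] at hq1
      norm_num at hq1
    have hqi : 0 < q i := lt_of_le_of_ne (hq i) (Ne.symm hi)
    calc (0:ℝ) < q i * Real.exp (g i) := mul_pos hqi (Real.exp_pos _)
    _ ≤ Z := Finset.single_le_sum (f := fun i => q i * Real.exp (g i))
        (fun j _ => mul_nonneg (hq j) (Real.exp_pos _).le) (Finset.mem_univ i)
  have key : ∀ i, p i - q i * Real.exp (g i) / Z ≤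
      p i * Real.log (p i / q i) - p i * g i + p i * Real.log Z := by
    intro i
    rcases eq_or_lt_of_le (hp i) with h0 | hpi
    · rw [← h0]
      have : 0 ≤ q i * Real.exp (g i) / Z :=
        div_nonneg (mul_nonneg (hq i) (Real.exp_pos _).le) hZpos.le
      simp only [zero_mul]
      linarith
    · have hqi : 0 < q i := by
        rcases eq_or_lt_of_le (hq i) with h0' | h
        · exact absurd (hac i h0'.symm) (by linarith)
        · exact h
      have hx : 0 < p i * Z / (q i * Real.exp (g i)) :=
        div_pos (mul_pos hpi hZpos) (mul_pos hqi (Real.exp_pos _))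
      have hlog : Real.log (p i * Z / (q i * Real.exp (g i)))
          = Real.log (p i / q i) - g i + Real.log Z := by
        rw [Real.log_div (by positivity) (by positivity), Real.log_mul (by positivity)
          (by positivity), Real.log_mul (by positivity) (Real.exp_ne_zero _),
          Real.log_exp, Real.log_div (by positivity) (by positivity)]
        ring
      have h1 := one_sub_inv_le_log hx
      have hinv : (p i * Z / (q i * Real.exp (g i)))⁻¹
          = q i * Real.exp (g i) / (p i * Z) := by
        rw [inv_div]
      rw [hinv] at h1
      have h2 : p i * (1 - q i * Real.exp (g i) / (p i * Z)) ≤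
          p i * Real.log (p i * Z / (q i * Real.exp (g i))) :=
        mul_le_mul_of_nonneg_left h1 (le_of_lt hpi)
      have h3 : p i * (1 - q i * Real.exp (g i) / (p i * Z))
          = p i - q i * Real.exp (g i) / Z := by
        field_simp
      rw [h3, hlog] at h2
      calc p i - q i * Real.exp (g i) / Z
          ≤ p i * (Real.log (p i / q i) - g i + Real.log Z) := h2
        _ = p i * Real.log (p i / q i) - p i * g i + p i * Real.log Z := by ring
  have hsum : ∑ i, (p i - q i * Real.exp (g i) / Z) ≤
      ∑ i, (p i * Real.log (p i / q i) - p i * g i + p i * Real.log Z) :=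
    Finset.sum_le_sum (fun i _ => key i)
  rw [Finset.sum_sub_distrib] at hsum
  have e1 : ∑ i, q i * Real.exp (g i) / Z = 1 := by
    rw [← Finset.sum_div, ← hZ, div_self hZpos.ne']
  have e2 : ∑ i, (p i * Real.log (p i / q i) - p i * g i + p i * Real.log Z)
      = ∑ i, p i * Real.log (p i / q i) - ∑ i, p i * g i + Real.log Z := by
    rw [Finset.sum_add_distrib, Finset.sum_sub_distrib, ← Finset.sum_mul, hp1, one_mul]
  rw [e1, e2, hp1] at hsum
  linarith

lemma relEntVol_ge_of_localOn {ι : Type*} [DecidableEq ι] {Λ : Finset ι}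
    {g : Config ι → ℝ} (hg : LocalOn Λ g)
    (ν' ν : Measure (Config ι)) [IsProbabilityMeasure ν'] [IsProbabilityMeasure ν] :
    ENNReal.ofReal ((∫ σ, g σ ∂ν') - (∫ σ, g σ ∂ν)
      - Real.log (∫ σ, Real.exp (g σ - ∫ τ, g τ ∂ν) ∂ν)) ≤ relEntVol ν' ν Λ := by
  unfold relEntVol
  split_ifs with hac
  · show _ ≤ ENNReal.ofReal (∑ b : Λ → Bool,
      (ν' (cyl Λ (extB Λ b))).toReal *
        Real.log ((ν' (cyl Λ (extB Λ b))).toReal / (ν (cyl Λ (extB Λ b))).toReal))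
    apply ENNReal.ofReal_le_ofReal
    set c := ∫ τ, g τ ∂ν with hc
    set p : (Λ → Bool) → ℝ := fun b => (ν' (cyl Λ (extB Λ b))).toReal with hp
    set q : (Λ → Bool) → ℝ := fun b => (ν (cyl Λ (extB Λ b))).toReal with hq
    have hexp : LocalOn Λ (fun σ => Real.exp (g σ - c)) := by
      intro σ τ h; simp only []; rw [hg σ τ h]
    have hI1 : ∫ σ, g σ ∂ν' = ∑ b, p b * g (extB Λ b) := integral_localOn hg ν'
    have hI3 : ∫ σ, Real.exp (g σ - c) ∂ν
        = ∑ b, q b * Real.exp (g (extB Λ b) - c) := integral_localOn hexp ν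
    have hDV := finite_DV p q (fun b => g (extB Λ b) - c)
      (fun _ => ENNReal.toReal_nonneg) (fun _ => ENNReal.toReal_nonneg)
      (sum_cyl_toReal Λ ν') (sum_cyl_toReal Λ ν)
      (fun b hb => by
        have hν : ν (cyl Λ (extB Λ b)) = 0 := by
          rcases (ENNReal.toReal_eq_zero_iff _).mp hb with h | h
          · exact h
          · exact absurd h (measure_ne_top ν _)
        simp only [hp, hac _ hν, ENNReal.toReal_zero])
    have e1 : ∑ b, p b * (g (extB Λ b) - c) = (∑ b, p b * g (extB Λ b)) - c := by
      simp only [hp, mul_sub, Finset.sum_sub_distrib, ← Finset.sum_mul, sum_cyl_toReal Λ ν',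
        one_mul]
    rw [e1] at hDV
    rw [hI1, hI3]
    linarith
  · exact le_top

lemma relEntVol_ge_gcb {ι : Type*} [DecidableEq ι] {Λ : Finset ι}
    {g : Config ι → ℝ} (hg : LocalOn Λ g) {C : ℝ}
    (ν' ν : Measure (Config ι)) [IsProbabilityMeasure ν'] [IsProbabilityMeasure ν]
    (hgcb : GCB ν C) :
    ENNReal.ofReal ((∫ σ, g σ ∂ν') - (∫ σ, g σ ∂ν) - C / 2 * oscNormSq g)
      ≤ relEntVol ν' ν Λ := by
  refine le_trans (ENNReal.ofReal_le_ofReal ?_) (relEntVol_ge_of_localOn hg ν' ν)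
  have := hgcb g ⟨Λ, hg⟩
  linarith

lemma mem_cube {d k : ℕ} {x : Site d} :
    x ∈ cube d k ↔ ∀ i, -(k:ℤ) ≤ x i ∧ x i ≤ k := by
  simp [cube, Fintype.mem_piFinset, Finset.mem_Icc]

lemma card_cube (d k : ℕ) : (cube d k).card = (2*k+1)^d := by
  have h : (Finset.Icc (-(k:ℤ)) (k:ℤ)).card = 2*k+1 := by
    rw [Int.card_Icc]; omega
  simp [cube, Fintype.card_piFinset, h]

lemma measurable_shift {d : ℕ} (a : Site d) : Measurable (shift a) :=
  measurable_pi_lambda _ fun _ => measurable_pi_apply _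


lemma key_alg {C L K Vn VN : ℝ} (hC : 0 < C) (hL : 0 < L) (hK : 0 < K)
    (hVn : 0 < Vn) (hVN : 0 < VN) (hVNK : VN ≤ Vn * K) {ε : ℝ} :
    ε^2/(2*C*L^2*K^2) * VN ≤
      (Vn * ε / (C * L^2 * VN)) * (Vn*ε)
        - C/2*(VN*((Vn * ε / (C * L^2 * VN))^2*L^2)) := by
  have e1 : (Vn * ε / (C * L^2 * VN)) * (Vn*ε)
        - C/2*(VN*((Vn * ε / (C * L^2 * VN))^2*L^2))
      = Vn^2*ε^2/(2*C*L^2*VN) := by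
    field_simp
    ring
  rw [e1, show ε^2/(2*C*L^2*K^2) * VN = ε^2*VN/(2*C*L^2*K^2) from by ring,
    div_le_div_iff₀ (by positivity) (by positivity)]
  have h4 : VN * VN ≤ (Vn*K)*(Vn*K) :=
    mul_le_mul hVNK hVNK hVN.le (by positivity)
  nlinarith [mul_le_mul_of_nonneg_left h4 (show (0:ℝ) ≤ 2*C*L^2*ε^2 by positivity)]

/-- if `ν, ν'` are translation-invariant stationary measures of a
PCA, `ν` satisfies `GCB(C)` and `ν' ≠ ν`, then `s_*(ν'|ν) > 0` (so `ν` and `ν'`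
cannot be Gibbs measures for the same translation-invariant potential, since the
latter would force `s_*(ν'|ν) = 0`). -/
theorem distinct_stationary_positive_entropy {d : ℕ} (P : PCA d)
    (ν ν' : Measure (Config (Site d))) [IsProbabilityMeasure ν]
    [IsProbabilityMeasure ν'] (hTI : TransInv ν) (hTI' : TransInv ν')
    (hstat : Pmeas P ν = ν) (hstat' : Pmeas P ν' = ν')
    (C : ℝ) (hC : 0 < C) (hgcb : GCB ν C) (hne : ν' ≠ ν) :
    0 < sStar ν' ν := by
  classical
  obtain ⟨Λ₀, b₀, hΛb⟩ := exists_cyl_ne ν' ν hne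
  have hΛne : Λ₀.Nonempty := by
    rcases Λ₀.eq_empty_or_nonempty with h | h
    · exfalso; apply hΛb; subst h
      have : cyl (∅ : Finset (Site d)) b₀ = Set.univ := by ext σ; simp [cyl]
      rw [this]; simp
    · exact h
  set f : Config (Site d) → ℝ := (cyl Λ₀ b₀).indicator 1 with hf
  have hf01 : ∀ σ, f σ = 0 ∨ f σ = 1 := fun σ => by
    by_cases h : σ ∈ cyl Λ₀ b₀ <;> simp [hf, Set.indicator_apply, h]
  have hfdiff : ∀ σ τ, |f σ - f τ| ≤ 1 := by
    intro σ τ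
    rcases hf01 σ with h1 | h1 <;> rcases hf01 τ with h2 | h2 <;> rw [h1, h2] <;> norm_num
  have hfloc : LocalOn Λ₀ f := by
    intro σ τ h
    have hmem : σ ∈ cyl Λ₀ b₀ ↔ τ ∈ cyl Λ₀ b₀ := by
      simp only [cyl, Set.mem_setOf_eq]
      exact forall₂_congr fun x hx => by rw [h x hx]
    by_cases hσ : σ ∈ cyl Λ₀ b₀
    · simp [hf, Set.indicator_apply, hσ, hmem.mp hσ]
    · have hτ : τ ∉ cyl Λ₀ b₀ := fun hh => hσ (hmem.mpr hh)
      simp [hf, Set.indicator_apply, hσ, hτ]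
  have hfshift_int : ∀ (a : Site d) (μ : Measure (Config (Site d)))
      [IsProbabilityMeasure μ], TransInv μ →
      (∫ σ, f (shift a σ) ∂μ) = (μ (cyl Λ₀ b₀)).toReal := by
    intro a μ _ hTIμ
    have h1 : (fun σ => f (shift a σ))
        = ((shift a) ⁻¹' (cyl Λ₀ b₀)).indicator (1 : Config (Site d) → ℝ) := by
      funext σ; simp [hf, Set.indicator_apply, Set.mem_preimage]
    rw [h1, integral_indicator_one ((measurable_shift a) (measurableSet_cyl _ _)), Measure.real,
      ← Measure.map_apply (measurable_shift a) (measurableSet_cyl _ _), hTIμ a]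
  have hfshift_integrable : ∀ (a : Site d) (μ : Measure (Config (Site d)))
      [IsProbabilityMeasure μ], Integrable (fun σ => f (shift a σ)) μ := by
    intro a μ _
    have h1 : (fun σ => f (shift a σ))
        = ((shift a) ⁻¹' (cyl Λ₀ b₀)).indicator (fun _ => (1:ℝ)) := by
      funext σ; simp [hf, Set.indicator_apply, Set.mem_preimage]
    rw [h1]
    exact (integrable_const 1).indicator ((measurable_shift a) (measurableSet_cyl _ _))
  obtain ⟨m, hm⟩ : ∃ m : ℕ, ∀ y ∈ Λ₀, ∀ i, -(m:ℤ) ≤ y i ∧ y i ≤ m := by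
    use Λ₀.sup (fun y => (Finset.univ.sup (fun i => (y i).natAbs)))
    intro y hy i
    have h1 : (y i).natAbs ≤ Λ₀.sup (fun y => Finset.univ.sup fun i => (y i).natAbs) :=
      le_trans (Finset.le_sup (f := fun i => (y i).natAbs) (Finset.mem_univ i))
        (Finset.le_sup (f := fun y => Finset.univ.sup fun i => (y i).natAbs) hy)
    have h2 : |y i| ≤ ((Λ₀.sup (fun y => Finset.univ.sup fun i => (y i).natAbs) : ℕ) : ℤ) := by
      rw [Int.abs_eq_natAbs]; exact_mod_cast h1
    exact abs_le.mp h2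
  set ε := (ν' (cyl Λ₀ b₀)).toReal - (ν (cyl Λ₀ b₀)).toReal with hε
  have hεne : ε ≠ 0 := by
    intro h0
    exact hΛb ((ENNReal.toReal_eq_toReal_iff' (measure_ne_top _ _) (measure_ne_top _ _)).mp
      (sub_eq_zero.mp h0))
  have hε2 : 0 < ε ^ 2 := by
    rcases hεne.lt_or_gt with h | h <;> nlinarith
  set L := (Λ₀.card : ℝ) with hL
  have hL1 : (1:ℝ) ≤ L := by
    rw [hL]; exact_mod_cast Finset.card_pos.mpr hΛne
  have hL0 : 0 < L := lt_of_lt_of_le one_pos hL1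
  set K := (((2*m+1 : ℕ) ^ d : ℕ) : ℝ) with hK
  have hK0 : 0 < K := by rw [hK]; positivity
  set δ := ε^2 / (2*C*L^2*K^2) with hδdef
  have hδ0 : 0 < δ := by
    rw [hδdef]; exact div_pos hε2 (by positivity)
  have hev : ∀ N : ℕ, m ≤ N →
      ENNReal.ofReal δ ≤ relEntVol ν' ν (cube d N) / ((cube d N).card : ℝ≥0∞) := by
    intro N hN
    set n := N - m with hn
    have hnm : n + m = N := Nat.sub_add_cancel hN
    set Vn := (((cube d n).card : ℕ) : ℝ) with hVn
    set VN := (((cube d N).card : ℕ) : ℝ) with hVN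
    have hVn0 : 0 < Vn := by rw [hVn, card_cube]; positivity
    have hVN0 : 0 < VN := by rw [hVN, card_cube]; positivity
    have hVNK : VN ≤ Vn * K := by
      rw [hVn, hVN, hK, card_cube, card_cube]
      have h1 : 2*N+1 ≤ (2*n+1) * (2*m+1) := by nlinarith [hnm]
      have h2 : ((2*N+1)^d : ℕ) ≤ ((2*n+1)^d : ℕ) * ((2*m+1)^d : ℕ) := by
        rw [← Nat.mul_pow]; exact Nat.pow_le_pow_left h1 d
      exact_mod_cast h2
    set t := Vn * ε / (C * L^2 * VN) with ht
    set g : Config (Site d) → ℝ := fun σ => t * ∑ a ∈ cube d n, f (shift a σ) with hg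
    have hycube : ∀ y ∈ Λ₀, ∀ a ∈ cube d n, y + a ∈ cube d N := by
      intro y hy a ha
      rw [mem_cube] at ha ⊢
      intro i
      have h1 := hm y hy i
      have h2 := ha i
      have h3 : (N:ℤ) = (n:ℤ) + (m:ℤ) := by exact_mod_cast hnm.symm
      simp only [Pi.add_apply]
      omega
    have hgloc : LocalOn (cube d N) g := by
      intro σ τ h
      simp only [hg]
      congr 1
      refine Finset.sum_congr rfl fun a ha => ?_
      refine hfloc _ _ fun y hy => ?_
      exact h _ (hycube y hy a ha)
    have hIg : ∀ (μ : Measure (Config (Site d))) [IsProbabilityMeasure μ], TransInv μ →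
        ∫ σ, g σ ∂μ = t * (Vn * (μ (cyl Λ₀ b₀)).toReal) := by
      intro μ _ hTIμ
      simp only [hg]
      rw [integral_const_mul, integral_finset_sum _ (fun a _ => hfshift_integrable a μ),
        Finset.sum_congr rfl (fun a _ => hfshift_int a μ hTIμ), Finset.sum_const,
        nsmul_eq_mul]
    have hdiffzero : ∀ (x : Site d) (σ : Config (Site d)) (a : Site d),
        (∀ y ∈ Λ₀, y + a ≠ x) → f (shift a (flipAt σ x)) = f (shift a σ) := by
      intro x σ a hxa
      refine hfloc _ _ fun y hy => ?_
      show flipAt σ x (y + a) = σ (y + a)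
      simp [flipAt, Function.update_of_ne (hxa y hy)]
    have hdiffbound : ∀ (x : Site d) (σ : Config (Site d)),
        |g (flipAt σ x) - g σ| ≤ |t| * L := by
      intro x σ
      have e : g (flipAt σ x) - g σ
          = t * ∑ a ∈ cube d n, (f (shift a (flipAt σ x)) - f (shift a σ)) := by
        simp only [hg, Finset.sum_sub_distrib]; ring
      rw [e, abs_mul]
      refine mul_le_mul_of_nonneg_left ?_ (abs_nonneg t)
      set T := Λ₀.image (fun y => x - y) with hT
      have hterm : ∀ a ∈ cube d n,
          |f (shift a (flipAt σ x)) - f (shift a σ)| ≤ if a ∈ T then (1:ℝ) else 0 := by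
        intro a _
        by_cases haT : a ∈ T
        · rw [if_pos haT]; exact hfdiff _ _
        · rw [if_neg haT]
          have heq : f (shift a (flipAt σ x)) = f (shift a σ) := by
            refine hdiffzero x σ a fun y hy hc => ?_
            exact haT (Finset.mem_image.mpr ⟨y, hy, by rw [← hc]; abel⟩)
          rw [heq, sub_self, abs_zero]
      calc |∑ a ∈ cube d n, (f (shift a (flipAt σ x)) - f (shift a σ))|
          ≤ ∑ a ∈ cube d n, |f (shift a (flipAt σ x)) - f (shift a σ)| :=
            Finset.abs_sum_le_sum_abs _ _
        _ ≤ ∑ a ∈ cube d n, (if a ∈ T then (1:ℝ) else 0) := Finset.sum_le_sum hterm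
        _ = ((cube d n ∩ T).card : ℝ) := by rw [Finset.sum_ite_mem]; simp
        _ ≤ (T.card : ℝ) := by
            exact_mod_cast Finset.card_le_card (Finset.inter_subset_right)
        _ ≤ L := by rw [hL, hT]; exact_mod_cast Finset.card_image_le
    have hosczero : ∀ x, x ∉ cube d N → osc g x = 0 := by
      intro x hx
      have hzero : ∀ σ : Config (Site d), g (flipAt σ x) - g σ = 0 := by
        intro σ
        have hcongr : ∀ a ∈ cube d n, f (shift a (flipAt σ x)) = f (shift a σ) := by
          intro a ha
          refine hdiffzero x σ a fun y hy hc => ?_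
          exact hx (hc ▸ hycube y hy a ha)
        simp only [hg]
        rw [Finset.sum_congr rfl hcongr]
        ring
      simp only [osc]
      have : (fun σ : Config (Site d) => g (flipAt σ x) - g σ) = fun _ => (0:ℝ) :=
        funext hzero
      rw [this, ciSup_const]
    have hoscbdd : ∀ x : Site d,
        BddAbove (Set.range fun σ : Config (Site d) => g (flipAt σ x) - g σ) := fun x =>
      ⟨|t| * L, by rintro _ ⟨σ, rfl⟩; exact (abs_le.mp (hdiffbound x σ)).2⟩
    have hsq : ∀ x : Site d, osc g x ^ 2 ≤ (|t| * L)^2 := by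
      intro x
      have h1 : osc g x ≤ |t| * L := ciSup_le fun σ => (abs_le.mp (hdiffbound x σ)).2
      have h2 : -(|t| * L) ≤ osc g x :=
        le_trans (abs_le.mp (hdiffbound x (fun _ => false))).1
          (le_ciSup (hoscbdd x) (fun _ => false))
      exact sq_le_sq' h2 h1
    have hoscsq : oscNormSq g ≤ VN * (|t| * L)^2 := by
      rw [oscNormSq, tsum_eq_sum (s := cube d N)
        (fun x hx => by rw [hosczero x hx]; norm_num)]
      calc ∑ x ∈ cube d N, osc g x ^ 2 ≤ (cube d N).card • ((|t| * L)^2) :=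
            Finset.sum_le_card_nsmul _ _ _ (fun x _ => hsq x)
        _ = VN * (|t| * L)^2 := by rw [nsmul_eq_mul, hVN]
    have hrel : ENNReal.ofReal (δ * VN) ≤ relEntVol ν' ν (cube d N) := by
      refine le_trans (ENNReal.ofReal_le_ofReal ?_) (relEntVol_ge_gcb hgloc ν' ν hgcb)
      have h1 : ∫ σ, g σ ∂ν' - ∫ σ, g σ ∂ν = t * (Vn * ε) := by
        rw [hIg ν' hTI', hIg ν hTI, hε]; ring
      have habs : (|t| * L)^2 = t^2 * L^2 := by rw [mul_pow, sq_abs]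
      have hosc2 : C / 2 * oscNormSq g ≤ C / 2 * (VN * (t^2 * L^2)) := by
        rw [← habs]
        exact mul_le_mul_of_nonneg_left hoscsq (by positivity)
      have halg := key_alg hC hL0 hK0 hVn0 hVN0 hVNK (ε := ε)
      rw [← ht] at halg
      rw [hδdef]
      calc ε^2/(2*C*L^2*K^2) * VN
          ≤ t * (Vn*ε) - C/2*(VN*(t^2*L^2)) := halg
        _ ≤ t * (Vn*ε) - C/2*oscNormSq g := sub_le_sub_left hosc2 _
        _ = ∫ σ, g σ ∂ν' - ∫ σ, g σ ∂ν - C/2*oscNormSq g := by rw [h1]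
    have hcard : ((cube d N).card : ℝ≥0∞) = ENNReal.ofReal VN := by
      rw [hVN, ENNReal.ofReal_natCast]
    calc ENNReal.ofReal δ = ENNReal.ofReal (δ * VN) / ENNReal.ofReal VN := by
          rw [← ENNReal.ofReal_div_of_pos hVN0, mul_div_assoc, div_self hVN0.ne', mul_one]
      _ ≤ relEntVol ν' ν (cube d N) / ((cube d N).card : ℝ≥0∞) := by
          rw [hcard]; exact ENNReal.div_le_div_right hrel _
  have hliminf : ENNReal.ofReal δ ≤ sStar ν' ν := by
    unfold sStar
    exact Filter.le_liminf_of_le (by isBoundedDefault)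
      (Filter.eventually_atTop.mpr ⟨m, hev⟩)
  exact lt_of_lt_of_le (ENNReal.ofReal_pos.mpr hδ0) hliminf
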